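/- Let X and Y be Banach spaces, K : X → Y a map, x₀ ∈ X, 0 < q < 1, B₀ > 0, and set η₀ = ‖K(x₀)‖. Let S be the closed ball in X of radius B₀η₀/(1−q) centered at x₀. Assume: (i) K is Fréchet differentiable at every point of S; (ii) the derivative K'(x₀) has a bounded linear right inverse B : Y → X (K'(x₀) ∘ B = id_Y) with ‖B‖ ≤ B₀; (iii) ‖K'(x₁) − K'(x₂)‖ ≤ q/(B₀(1+q)) for all x₁, x₂ ∈ S. Then there exist a point x* ∈ S with K(x*) = 0 and a sequence (x_n)_{n≥0} in S starting from the given x₀ such that for every n: K'(x_n)(x_{n+1} − x_n) = −K(x_n), ‖x_{n+1} − x_n‖ ≤ (1+q)B₀‖K(x_n)‖, and ‖x* − x_n‖ ≤ qⁿ η₀ B₀/(1−q); in particular x_n → x*. -/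

import Mathlib

/-- Theorem 2.5 (Newton–Kantorovich method with right inverses): under the stated conditions
the equation `K x = 0` has a solution `x*`, obtained as the limit of a Newton
iteration `x_{n+1} = x_n - [K'(x_n)]_r^{-1} K x_n`, with geometric rate of convergence. -/
theorem stmt_1 {X Y : Type*} [NormedAddCommGroup X] [NormedSpace ℝ X] [CompleteSpace X]
    [NormedAddCommGroup Y] [NormedSpace ℝ Y] [CompleteSpace Y]
    (K : X → Y) (K' : X → X →L[ℝ] Y) (x₀ : X) (q B₀ : ℝ)
    (hq0 : 0 < q) (hq1 : q < 1) (hB₀ : 0 < B₀)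
    (S : Set X) (hS : S = Metric.closedBall x₀ (B₀ * ‖K x₀‖ / (1 - q)))
    (hdiff : ∀ x ∈ S, HasFDerivAt K (K' x) x)
    (B : Y →L[ℝ] X) (hright : (K' x₀).comp B = ContinuousLinearMap.id ℝ Y)
    (hBnorm : ‖B‖ ≤ B₀)
    (hlip : ∀ x₁ ∈ S, ∀ x₂ ∈ S, ‖K' x₁ - K' x₂‖ ≤ q / (B₀ * (1 + q))) :
    ∃ xstar ∈ S, K xstar = 0 ∧
      ∃ xs : ℕ → X, xs 0 = x₀ ∧ (∀ n, xs n ∈ S) ∧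
        (∀ n, (K' (xs n)) (xs (n + 1) - xs n) = -(K (xs n))) ∧
        (∀ n, ‖xs (n + 1) - xs n‖ ≤ (1 + q) * B₀ * ‖K (xs n)‖) ∧
        (∀ n, ‖xstar - xs n‖ ≤ q ^ n * ‖K x₀‖ * B₀ / (1 - q)) ∧
        Filter.Tendsto xs Filter.atTop (nhds xstar) := by
  have h1q : (0:ℝ) < 1 + q := by linarith
  have h1q' : (0:ℝ) < 1 - q := by linarith
  set η := ‖K x₀‖ with hη
  have hη0 : 0 ≤ η := norm_nonneg _
  set δ := q / (B₀ * (1 + q)) with hδ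
  have hδ0 : 0 ≤ δ := by positivity
  have hδB : δ * B₀ = q / (1 + q) := by rw [hδ]; field_simp
  -- scalar arithmetic facts (proved early, in a small context)
  have harith1 : ∀ c : ℝ, c ≤ 1 → B₀ * η * c / (1 - q) ≤ B₀ * η / (1 - q) := by
    intro c hc
    rw [div_le_div_iff₀ h1q' h1q']
    nlinarith [mul_le_mul_of_nonneg_left hc (by positivity : (0:ℝ) ≤ B₀ * η * (1 - q))]
  have harith2 : ∀ n : ℕ, B₀ * η * q ^ n + B₀ * η * (1 - q ^ n) / (1 - q)
      = B₀ * η * (1 - q ^ (n + 1)) / (1 - q) := by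
    intro n
    field_simp
    ring
  have hpow1 : ∀ n : ℕ, 1 - q ^ n ≤ 1 := by
    intro n
    have : (0:ℝ) ≤ q ^ n := by positivity
    linarith
  have harith3 : ∀ n : ℕ, (1 + q) * B₀ * (δ * (B₀ * η * q ^ n)) = B₀ * η * q ^ (n + 1) := by
    intro n
    have h : (1 + q) * B₀ * δ = q := by
      rw [hδ]; field_simp
    calc (1 + q) * B₀ * (δ * (B₀ * η * q ^ n)) = ((1 + q) * B₀ * δ) * (B₀ * η * q ^ n) := by ring
      _ = q * (B₀ * η * q ^ n) := by rw [h]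
      _ = B₀ * η * q ^ (n + 1) := by ring
  have harith4 : ∀ n : ℕ, δ * (B₀ * η * q ^ n) ≤ η * q ^ (n + 1) := by
    intro n
    have h : δ * B₀ ≤ q := hδB ▸ div_le_self (le_of_lt hq0) (by linarith)
    calc δ * (B₀ * η * q ^ n) = (δ * B₀) * (η * q ^ n) := by ring
      _ ≤ q * (η * q ^ n) := by
          apply mul_le_mul_of_nonneg_right h
          positivity
      _ = η * q ^ (n + 1) := by ring
  have hRnn : 0 ≤ B₀ * η / (1 - q) := by positivity
  have hmem0 : x₀ ∈ S := by rw [hS]; exact Metric.mem_closedBall_self hRnn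
  have hconv : Convex ℝ S := hS ▸ convex_closedBall _ _
  -- mean value inequality
  have mvt : ∀ a ∈ S, ∀ b ∈ S, ‖K b - K a - K' a (b - a)‖ ≤ δ * ‖b - a‖ := by
    intro a ha b hb
    exact hconv.norm_image_sub_le_of_norm_hasFDerivWithin_le'
      (fun z hz => (hdiff z hz).hasFDerivWithinAt)
      (fun z hz => hlip z hz a ha) ha hb
  -- right inverse at each point of S
  set Binv : X → (Y →L[ℝ] X) := fun x => B.comp (Ring.inverse ((K' x).comp B)) with hBinv
  have key : ∀ x ∈ S,
      (K' x).comp (Binv x) = ContinuousLinearMap.id ℝ Y ∧ ‖Binv x‖ ≤ (1 + q) * B₀ := by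
    intro x hx
    set T := (K' x).comp B with hT
    have hTd : ‖(1 : Y →L[ℝ] Y) - T‖ ≤ q / (1 + q) := by
      have h1 : (1 : Y →L[ℝ] Y) - T = (K' x₀ - K' x).comp B := by
        rw [ContinuousLinearMap.sub_comp, hright, hT]; rfl
      rw [h1]
      calc ‖(K' x₀ - K' x).comp B‖ ≤ ‖K' x₀ - K' x‖ * ‖B‖ :=
            ContinuousLinearMap.opNorm_comp_le _ _
        _ ≤ δ * B₀ :=
            mul_le_mul (hlip x₀ hmem0 x hx) hBnorm (norm_nonneg _) hδ0
        _ = q / (1 + q) := hδB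
    have hlt : ‖(1 : Y →L[ℝ] Y) - T‖ < 1 :=
      lt_of_le_of_lt hTd (by rw [div_lt_one h1q]; linarith)
    set u : (Y →L[ℝ] Y)ˣ := Units.oneSub _ hlt with hu
    have huval : (u : Y →L[ℝ] Y) = T := sub_sub_cancel 1 T
    have hinvT : Ring.inverse T = ((u⁻¹ : (Y →L[ℝ] Y)ˣ) : Y →L[ℝ] Y) := by
      rw [← huval, Ring.inverse_unit]
    have hum : ((u⁻¹ : (Y →L[ℝ] Y)ˣ) : Y →L[ℝ] Y) * T = 1 := by
      rw [← huval]; exact u.inv_mul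
    have hrepr : ((u⁻¹ : (Y →L[ℝ] Y)ˣ) : Y →L[ℝ] Y)
        = 1 + ((u⁻¹ : (Y →L[ℝ] Y)ˣ) : Y →L[ℝ] Y) * (1 - T) := by
      rw [mul_sub, mul_one, hum]; abel
    have hninv : ‖((u⁻¹ : (Y →L[ℝ] Y)ˣ) : Y →L[ℝ] Y)‖ ≤ 1 + q := by
      set v := ‖((u⁻¹ : (Y →L[ℝ] Y)ˣ) : Y →L[ℝ] Y)‖ with hv
      have hv0 : 0 ≤ v := norm_nonneg _
      have h2 : v ≤ 1 + v * (q / (1 + q)) := by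
        calc v = ‖(1 : Y →L[ℝ] Y) + ((u⁻¹ : (Y →L[ℝ] Y)ˣ) : Y →L[ℝ] Y) * (1 - T)‖ := by
              rw [hv, ← hrepr]
          _ ≤ ‖(1 : Y →L[ℝ] Y)‖ + ‖((u⁻¹ : (Y →L[ℝ] Y)ˣ) : Y →L[ℝ] Y) * (1 - T)‖ :=
              norm_add_le _ _
          _ ≤ 1 + v * (q / (1 + q)) := by
              refine add_le_add ContinuousLinearMap.norm_id_le ?_
              refine (norm_mul_le _ _).trans ?_
              exact mul_le_mul_of_nonneg_left hTd hv0
      have h3 : v * (1 + q) ≤ (1 + q) + v * q := by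
        have h4 := mul_le_mul_of_nonneg_right h2 (le_of_lt h1q)
        calc v * (1 + q) ≤ (1 + v * (q / (1 + q))) * (1 + q) := h4
          _ = (1 + q) + v * q := by field_simp
      nlinarith
    constructor
    · show (K' x).comp (B.comp (Ring.inverse T)) = ContinuousLinearMap.id ℝ Y
      rw [← ContinuousLinearMap.comp_assoc, ← hT, hinvT]
      rw [← ContinuousLinearMap.mul_def, ← huval, u.mul_inv]
      rfl
    · show ‖B.comp (Ring.inverse T)‖ ≤ (1 + q) * B₀
      calc ‖B.comp (Ring.inverse T)‖ ≤ ‖B‖ * ‖Ring.inverse T‖ :=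
            ContinuousLinearMap.opNorm_comp_le _ _
        _ ≤ B₀ * (1 + q) := by
            rw [hinvT]; exact mul_le_mul hBnorm hninv (norm_nonneg _) (le_of_lt hB₀)
        _ = (1 + q) * B₀ := mul_comm _ _
  -- the Newton iteration
  set next : X → X := fun x => x - Binv x (K x) with hnext
  set xs : ℕ → X := fun n => next^[n] x₀ with hxs
  have hxs0 : xs 0 = x₀ := rfl
  have hxssucc : ∀ n, xs (n + 1) = next (xs n) := fun n =>
    Function.iterate_succ_apply' next n x₀
  have hderiv_step : ∀ x ∈ S, K' x (next x - x) = -(K x) := by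
    intro x hx
    have h0 : next x - x = -(Binv x (K x)) := by simp [hnext]
    rw [h0, map_neg]
    have h1 : K' x (Binv x (K x)) = K x := by
      have h2 := (key x hx).1
      calc K' x (Binv x (K x)) = ((K' x).comp (Binv x)) (K x) := rfl
        _ = K x := by rw [h2]; rfl
    rw [h1]
  have hstep_norm : ∀ x ∈ S, ‖next x - x‖ ≤ (1 + q) * B₀ * ‖K x‖ := by
    intro x hx
    have h0 : next x - x = -(Binv x (K x)) := by simp [hnext]
    rw [h0, norm_neg]
    calc ‖Binv x (K x)‖ ≤ ‖Binv x‖ * ‖K x‖ := ContinuousLinearMap.le_opNorm _ _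
      _ ≤ (1 + q) * B₀ * ‖K x‖ :=
          mul_le_mul_of_nonneg_right (key x hx).2 (norm_nonneg _)
  -- first step is sharp
  have hBinv0 : Binv x₀ = B := by
    rw [hBinv]
    simp only [hright]
    have h1 : Ring.inverse (ContinuousLinearMap.id ℝ Y) = (1 : Y →L[ℝ] Y) := by
      rw [show (ContinuousLinearMap.id ℝ Y) = (1 : Y →L[ℝ] Y) from rfl, Ring.inverse_one]
    rw [h1]
    ext y
    rfl
  -- main induction
  have main : ∀ n, ‖xs n - x₀‖ ≤ B₀ * η * (1 - q ^ n) / (1 - q)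
      ∧ ‖xs (n + 1) - xs n‖ ≤ B₀ * η * q ^ n ∧ ‖K (xs n)‖ ≤ η * q ^ n := by
    intro n
    induction n with
    | zero =>
      refine ⟨by simp [hxs0], ?_, by simp [hxs0, hη]⟩
      rw [hxssucc 0, hxs0]
      have h0 : next x₀ - x₀ = -(Binv x₀ (K x₀)) := by simp [hnext]
      rw [h0, norm_neg, hBinv0]
      calc ‖B (K x₀)‖ ≤ ‖B‖ * ‖K x₀‖ := ContinuousLinearMap.le_opNorm _ _
        _ ≤ B₀ * η * q ^ 0 := by
            rw [pow_zero, mul_one]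
            exact mul_le_mul_of_nonneg_right hBnorm hη0
    | succ n ih =>
      obtain ⟨ih1, ih2, ih3⟩ := ih
      have hmemn : xs n ∈ S := by
        rw [hS, Metric.mem_closedBall, dist_eq_norm]
        exact ih1.trans (harith1 _ (hpow1 n))
      have h1 : ‖xs (n + 1) - x₀‖ ≤ B₀ * η * (1 - q ^ (n + 1)) / (1 - q) := by
        calc ‖xs (n + 1) - x₀‖ ≤ ‖xs (n + 1) - xs n‖ + ‖xs n - x₀‖ :=
              norm_sub_le_norm_sub_add_norm_sub _ _ _
          _ ≤ B₀ * η * q ^ n + B₀ * η * (1 - q ^ n) / (1 - q) := add_le_add ih2 ih1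
          _ = B₀ * η * (1 - q ^ (n + 1)) / (1 - q) := harith2 n
      have hmemn1 : xs (n + 1) ∈ S := by
        rw [hS, Metric.mem_closedBall, dist_eq_norm]
        exact h1.trans (harith1 _ (hpow1 (n + 1)))
      have hKn1 : ‖K (xs (n + 1))‖ ≤ δ * ‖xs (n + 1) - xs n‖ := by
        have hm := mvt (xs n) hmemn (xs (n + 1)) hmemn1
        have heq : K' (xs n) (xs (n + 1) - xs n) = -(K (xs n)) := by
          rw [hxssucc n]; exact hderiv_step (xs n) hmemn
        rw [heq] at hm
        calc ‖K (xs (n + 1))‖ = ‖K (xs (n + 1)) - K (xs n) - -(K (xs n))‖ := by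
              congr 1; abel
          _ ≤ δ * ‖xs (n + 1) - xs n‖ := hm
      have hKbound : ‖K (xs (n + 1))‖ ≤ δ * (B₀ * η * q ^ n) :=
        hKn1.trans (mul_le_mul_of_nonneg_left ih2 hδ0)
      refine ⟨h1, ?_, hKbound.trans (harith4 n)⟩
      rw [hxssucc (n + 1)]
      calc ‖next (xs (n + 1)) - xs (n + 1)‖ ≤ (1 + q) * B₀ * ‖K (xs (n + 1))‖ :=
            hstep_norm _ hmemn1
        _ ≤ (1 + q) * B₀ * (δ * (B₀ * η * q ^ n)) := by
            apply mul_le_mul_of_nonneg_left hKbound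
            positivity
        _ = B₀ * η * q ^ (n + 1) := harith3 n
  have hmem : ∀ n, xs n ∈ S := by
    intro n
    rw [hS, Metric.mem_closedBall, dist_eq_norm]
    exact (main n).1.trans (harith1 _ (hpow1 n))
  -- Cauchy sequence and limit
  have hdist : ∀ n, dist (xs n) (xs (n + 1)) ≤ (B₀ * η) * q ^ n := by
    intro n
    rw [dist_eq_norm, norm_sub_rev]
    exact (main n).2.1
  have hcauchy : CauchySeq xs := cauchySeq_of_le_geometric q (B₀ * η) hq1 hdist
  obtain ⟨xstar, hxstar⟩ := cauchySeq_tendsto_of_complete hcauchy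
  have htail : ∀ n, ‖xstar - xs n‖ ≤ q ^ n * η * B₀ / (1 - q) := by
    intro n
    have h1 := dist_le_of_le_geometric_of_tendsto q (B₀ * η) hq1 hdist hxstar n
    rw [dist_eq_norm, norm_sub_rev] at h1
    calc ‖xstar - xs n‖ ≤ B₀ * η * q ^ n / (1 - q) := h1
      _ = q ^ n * η * B₀ / (1 - q) := by ring_nf
  have hxstarS : xstar ∈ S := by
    rw [hS, Metric.mem_closedBall, dist_eq_norm]
    have h1 := htail 0
    rw [hxs0, pow_zero, one_mul] at h1
    calc ‖xstar - x₀‖ ≤ η * B₀ / (1 - q) := h1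
      _ = B₀ * ‖K x₀‖ / (1 - q) := by rw [hη]; ring
  have hKzero : K xstar = 0 := by
    have hcont : Filter.Tendsto (fun n => K (xs n)) Filter.atTop (nhds (K xstar)) :=
      ((hdiff xstar hxstarS).continuousAt.tendsto.comp hxstar)
    have hzero : Filter.Tendsto (fun n => K (xs n)) Filter.atTop (nhds 0) := by
      apply squeeze_zero_norm (fun n => (main n).2.2)
      have h1 : Filter.Tendsto (fun n : ℕ => q ^ n) Filter.atTop (nhds 0) :=
        tendsto_pow_atTop_nhds_zero_of_lt_one (le_of_lt hq0) hq1
      simpa using h1.const_mul η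
    exact tendsto_nhds_unique hcont hzero
  refine ⟨xstar, hxstarS, hKzero, xs, hxs0, hmem, ?_, ?_, htail, hxstar⟩
  · intro n
    rw [hxssucc n]
    exact hderiv_step (xs n) (hmem n)
  · intro n
    rw [hxssucc n]
    exact hstep_norm (xs n) (hmem n)
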